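/- arXiv:2407.08300 — 2 statements merged into one kernel-verified Lean document; each statement's English description precedes it below -/
import Mathlib

section
/- The dual cone of Γ₂⁺ equals the set {λ ∈ closure(Γₙ⁺) : |λ|² ≤ (σ₁(λ))²/(n−1)}, where the dual cone is (Γ₂⁺)* = {λ ∈ ℝⁿ : λ·μ ≥ 0 for all μ ∈ Γ₂⁺}. -/
open Finset

/-- σ₂ as the sum over pairs i < j. -/
noncomputable def sigma2 {n : ℕ} (l : Fin n → ℝ) : ℝ :=
  ∑ i, ∑ j ∈ Finset.univ.filter (fun j => i < j), l i * l j

/-- The cone Γ₂⁺ = {λ : σ₁(λ) > 0, σ₂(λ) > 0}. -/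
noncomputable def Gamma2 (n : ℕ) : Set (Fin n → ℝ) :=
  {l | 0 < ∑ i, l i ∧ 0 < sigma2 l}

lemma two_sigma2 {n : ℕ} (l : Fin n → ℝ) :
    2 * sigma2 l = (∑ i, l i)^2 - ∑ i, (l i)^2 := by
  have hswap : sigma2 l = ∑ i, ∑ j ∈ Finset.univ.filter (fun j => j < i), l i * l j := by
    rw [sigma2]
    rw [Finset.sum_comm' (t' := Finset.univ) (s' := fun j => Finset.univ.filter (fun i => i < j))
      (by intro x y; simp)]
    exact Finset.sum_congr rfl fun j _ => Finset.sum_congr rfl fun i _ => mul_comm _ _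
  have hsq : (∑ i, l i)^2 = ∑ i, ∑ j, l i * l j := by
    rw [sq, Finset.sum_mul_sum]
  have hsplit : ∀ i : Fin n, ∑ j, l i * l j
      = (∑ j ∈ Finset.univ.filter (fun j => i < j), l i * l j)
        + ((∑ j ∈ Finset.univ.filter (fun j => j < i), l i * l j) + l i * l i) := by
    intro i
    rw [← Finset.sum_filter_add_sum_filter_not Finset.univ (fun j => i < j)]
    congr 1
    have : Finset.univ.filter (fun j => ¬ i < j) = insert i (Finset.univ.filter (fun j => j < i)) := by
      ext j
      simp [Finset.mem_insert, not_lt, le_iff_lt_or_eq, or_comm, eq_comm]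
    rw [this, Finset.sum_insert (by simp)]
    ring
  rw [hsq]
  simp_rw [hsplit]
  rw [Finset.sum_add_distrib, Finset.sum_add_distrib, ← sigma2, ← hswap]
  simp_rw [← sq]
  ring

lemma sum_shift_mul {n : ℕ} (f g : Fin n → ℝ) (a b : ℝ) :
    ∑ i, (f i - a) * (g i - b)
      = (∑ i, f i * g i) - b * (∑ i, f i) - a * (∑ i, g i) + n * (a * b) := by
  have h : ∀ i, (f i - a) * (g i - b) = f i * g i - b * f i - a * g i + a * b := fun i => by ring
  simp_rw [h]
  rw [Finset.sum_add_distrib, Finset.sum_sub_distrib, Finset.sum_sub_distrib,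
    ← Finset.mul_sum, ← Finset.mul_sum]
  simp [Finset.card_univ, nsmul_eq_mul]

lemma sum_sq_shift {n : ℕ} (f : Fin n → ℝ) (a : ℝ) :
    ∑ i, (f i - a)^2 = (∑ i, (f i)^2) - 2 * a * (∑ i, f i) + n * a^2 := by
  have h : ∀ i : Fin n, (f i - a)^2 = (f i - a) * (f i - a) := fun i => sq (f i - a) ▸ by ring
  simp_rw [h, sum_shift_mul f f a a]
  simp_rw [← sq]
  ring

set_option maxHeartbeats 1000000 in
/-- (Γ₂⁺)* = {λ ∈ closure(Γₙ⁺) : |λ|² ≤ σ₁(λ)²/(n−1)}. -/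
theorem dual_cone_Gamma2 (n : ℕ) (hn : 2 ≤ n) :
    {l : Fin n → ℝ | ∀ μ ∈ Gamma2 n, 0 ≤ ∑ i, l i * μ i}
      = {l : Fin n → ℝ | (∀ i, 0 ≤ l i) ∧
          ∑ i, (l i) ^ 2 ≤ (∑ i, l i) ^ 2 / (n - 1)} := by
  have hn2 : (2:ℝ) ≤ (n:ℝ) := by exact_mod_cast hn
  have hnpos : (0:ℝ) < n := by linarith
  have hn0 : (n:ℝ) ≠ 0 := ne_of_gt hnpos
  have hn1 : (0:ℝ) < (n:ℝ) - 1 := by linarith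
  ext l
  simp only [Set.mem_setOf_eq]
  set S := ∑ i, l i with hS
  set A := ∑ i, (l i)^2 with hA
  constructor
  · intro hdual
    have hone : (fun _ : Fin n => (1:ℝ)) ∈ Gamma2 n := by
      constructor
      · simpa [Finset.card_univ] using hnpos
      · have h2 := two_sigma2 (fun _ : Fin n => (1:ℝ))
        simp [Finset.card_univ] at h2
        nlinarith
    have hSnonneg : 0 ≤ S := by
      have := hdual _ hone
      simpa [hS] using this
    have hpos : ∀ i, 0 ≤ l i := by
      intro i
      by_contra hi
      push_neg at hi
      have hne : l i ≠ 0 := ne_of_lt hi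
      set t := (S + 1) / (-(l i)) with ht
      have htpos : 0 < t := div_pos (by linarith) (by linarith)
      set μ := fun j : Fin n => 1 + t * (if j = i then 1 else 0) with hμ
      have hsumμ : ∑ j, μ j = n + t := by
        simp [hμ, Finset.sum_add_distrib, ← Finset.mul_sum, Finset.card_univ]
      have hsumμ2 : ∑ j, (μ j)^2 = (n - 1) + (1 + t)^2 := by
        have h : ∀ j : Fin n, (μ j)^2 = 1 + (if j = i then 2*t + t^2 else 0) := by
          intro j
          by_cases hji : j = i <;> simp [hμ, hji] <;> ring
        simp_rw [h]
        rw [Finset.sum_add_distrib, Finset.sum_ite_eq' Finset.univ i]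
        simp [Finset.card_univ]
        ring
      have hμmem : μ ∈ Gamma2 n := by
        constructor
        · rw [hsumμ]; positivity
        · have h2 := two_sigma2 μ
          rw [hsumμ, hsumμ2] at h2
          nlinarith
      have hge := hdual _ hμmem
      have hcomp : ∑ j, l j * μ j = S + t * l i := by
        have h : ∀ j : Fin n, l j * μ j = l j + (if j = i then t * l i else 0) := by
          intro j
          by_cases hji : j = i <;> simp [hμ, hji] <;> ring
        simp_rw [h]
        rw [Finset.sum_add_distrib, Finset.sum_ite_eq' Finset.univ i]
        simp [hS]
      rw [hcomp] at hge
      have htl : t * l i = -(S + 1) := by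
        have hdiv : l i / (-(l i)) = -1 := by
          rw [div_neg, div_self hne]
        rw [ht, div_mul_eq_mul_div, mul_div_assoc, hdiv]
        ring
      linarith
    refine ⟨hpos, ?_⟩
    by_contra hcon
    push_neg at hcon
    have hAgt : S^2 < (n - 1) * A := by
      rw [div_lt_iff₀ hn1] at hcon
      linarith [hcon]
    have hAnonneg : 0 ≤ A := Finset.sum_nonneg fun i _ => sq_nonneg _
    set V := A - S^2 / n with hV
    have hnV : (n:ℝ) * V = n * A - S^2 := by rw [hV]; field_simp
    have hVpos : 0 < V := by nlinarith [sq_nonneg S]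
    set c1 := Real.sqrt (n * (n-1) / V) with hc1
    have hc1sq : c1^2 = n * (n-1) / V := Real.sq_sqrt (by positivity)
    have hc1pos : 0 < c1 := Real.sqrt_pos.mpr (by positivity)
    set c0 := S / V with hc0
    have hc0nonneg : 0 ≤ c0 := div_nonneg hSnonneg (le_of_lt hVpos)
    have hc0lt : c0 < c1 := by
      have hsq : c0^2 < c1^2 := by
        rw [hc1sq, hc0, div_pow, div_lt_div_iff₀ (by positivity) hVpos]
        have hint1 := mul_lt_mul_of_pos_right hAgt hVpos
        have hint2 : (0:ℝ) < ((n:ℝ)-1) * V * (((n:ℝ)-1)*A - S^2) :=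
          mul_pos (mul_pos hn1 hVpos) (by linarith)
        nlinarith [hnV, hint1, hint2, hVpos]
      nlinarith
    set c := (c0 + c1)/2 with hc
    have hcpos : 0 < c := by rw [hc]; linarith
    have hc0c : c0 < c := by rw [hc]; linarith
    have hcc1 : c < c1 := by rw [hc]; linarith
    set μ := fun i : Fin n => 1 - c * (l i - S / n) with hμ
    have hsum1 : ∑ i, (l i - S/n) = 0 := by
      rw [Finset.sum_sub_distrib, ← hS]
      simp [Finset.card_univ]
      field_simp
      ring
    have hsumμ : ∑ i, μ i = n := by
      simp only [hμ]
      rw [Finset.sum_sub_distrib, ← Finset.mul_sum, hsum1]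
      simp [Finset.card_univ]
    have hsumμ2 : ∑ i, (μ i)^2 = n + c^2 * V := by
      have h : ∀ i : Fin n, (μ i)^2 = 1 - 2*c*(l i - S/n) + c^2 * (l i - S/n)^2 := by
        intro i; simp only [hμ]; ring
      simp_rw [h]
      rw [Finset.sum_add_distrib, Finset.sum_sub_distrib, ← Finset.mul_sum, ← Finset.mul_sum,
        hsum1, sum_sq_shift l (S/n), ← hS, ← hA]
      rw [Finset.sum_const, Finset.card_univ, Fintype.card_fin, nsmul_eq_mul, mul_one, hV]
      field_simp
      ring
    have hμmem : μ ∈ Gamma2 n := by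
      constructor
      · rw [hsumμ]; positivity
      · have h2 := two_sigma2 μ
        rw [hsumμ, hsumμ2] at h2
        have hcsq : c^2 < c1^2 := by nlinarith
        rw [hc1sq, lt_div_iff₀ hVpos] at hcsq
        nlinarith
    have hd := hdual _ hμmem
    have hcomp : ∑ i, l i * μ i = S - c * V := by
      have h : ∀ i : Fin n, l i * μ i = l i - c * (l i * l i - (S/n) * l i) := by
        intro i; simp only [hμ]; ring
      simp_rw [h]
      rw [Finset.sum_sub_distrib, ← Finset.mul_sum, Finset.sum_sub_distrib, ← Finset.mul_sum]
      simp_rw [← sq]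
      rw [← hS, ← hA, hV]
      ring
    rw [hcomp] at hd
    have hlt : S < c * V := by
      rw [hc0, div_lt_iff₀ hVpos] at hc0c
      linarith
    linarith
  · rintro ⟨hpos, hineq⟩ μ hμ
    obtain ⟨hT, hs2⟩ := hμ
    set T := ∑ i, μ i with hT'
    set B := ∑ i, (μ i)^2 with hB
    have hBT : B < T^2 := by
      have h2 := two_sigma2 μ
      rw [← hT', ← hB] at h2
      nlinarith
    have hSnonneg : 0 ≤ S := Finset.sum_nonneg fun i _ => hpos i
    have hA1 : (n - 1) * A ≤ S^2 := by
      rw [le_div_iff₀ hn1] at hineq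
      linarith
    set P := ∑ i, l i * μ i with hP
    have e1 : ∑ i, (l i - S/n) * (μ i - T/n) = P - S * T / n := by
      rw [sum_shift_mul l μ (S/n) (T/n), ← hS, ← hT', ← hP]
      field_simp
      ring
    have e2 : ∑ i, (l i - S/n)^2 = A - S^2/n := by
      rw [sum_sq_shift l (S/n), ← hS, ← hA]
      field_simp
      ring
    have e3 : ∑ i, (μ i - T/n)^2 = B - T^2/n := by
      rw [sum_sq_shift μ (T/n), ← hT', ← hB]
      field_simp
      ring
    have hCS : (P - S*T/n)^2 ≤ (A - S^2/n) * (B - T^2/n) := by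
      have h := Finset.sum_mul_sq_le_sq_mul_sq Finset.univ
        (fun i => l i - S/n) (fun i => μ i - T/n)
      simpa only [e1, e2, e3] using h
    have hvA : 0 ≤ A - S^2/n := by
      have h := sq_sum_le_card_mul_sum_sq (s := Finset.univ) (f := l)
      simp only [Finset.card_univ, Fintype.card_fin, ← hS, ← hA] at h
      rw [sub_nonneg, div_le_iff₀ hnpos]
      nlinarith [h]
    have hvB : 0 ≤ B - T^2/n := by
      have h := sq_sum_le_card_mul_sum_sq (s := Finset.univ) (f := μ)
      simp only [Finset.card_univ, Fintype.card_fin, ← hT', ← hB] at h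
      rw [sub_nonneg, div_le_iff₀ hnpos]
      nlinarith [h]
    have hb1 : A - S^2/n ≤ S^2 / (n * (n-1)) := by
      rw [sub_le_iff_le_add]
      have heq : S^2/((n:ℝ)*(n-1)) + S^2/n = S^2/(n-1) := by field_simp; ring
      rw [heq, le_div_iff₀ hn1]
      linarith
    have hb2 : B - T^2/n ≤ (n-1) * T^2 / n := by
      have heq : ((n:ℝ)-1) * T^2 / n = T^2 - T^2/n := by field_simp
      rw [heq]
      linarith
    have hprod : (A - S^2/n) * (B - T^2/n) ≤ (S * T / n)^2 := by
      calc (A - S^2/n) * (B - T^2/n) ≤ S^2/(n*(n-1)) * ((n-1)*T^2/n) :=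
            mul_le_mul hb1 hb2 hvB (by positivity)
        _ = (S*T/n)^2 := by field_simp
    have hSTn : 0 ≤ S * T / n := by positivity
    nlinarith [hCS, hprod, hSTn, sq_nonneg P]
end

section
/- If A and B are real symmetric n×n matrices with eigenvalue vector of A in Γₖ⁺ and eigenvalue vector of B in the dual cone (Γₖ⁺)*, then Trace(AB) ≥ 0. -/
open Finset

/-- The k-th elementary symmetric polynomial of l ∈ ℝⁿ. -/
noncomputable def esymm (n k : ℕ) (l : Fin n → ℝ) : ℝ :=
  ∑ s ∈ Finset.powersetCard k (Finset.univ : Finset (Fin n)), ∏ i ∈ s, l i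

/-- The cone Γₖ⁺ = {λ : σⱼ(λ) > 0 for 1 ≤ j ≤ k}. -/
noncomputable def Gamma (n k : ℕ) : Set (Fin n → ℝ) :=
  {l | ∀ j, 1 ≤ j → j ≤ k → 0 < esymm n j l}

lemma esymm_comp_perm (n j : ℕ) (l : Fin n → ℝ) (e : Equiv.Perm (Fin n)) :
    esymm n j (l ∘ e) = esymm n j l := by
  unfold esymm
  refine Finset.sum_nbij' (fun s => s.image e) (fun s => s.image e.symm) ?_ ?_ ?_ ?_ ?_
  · intro s hs
    simp only [Finset.mem_powersetCard_univ] at *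
    rw [Finset.card_image_of_injective _ e.injective]; exact hs
  · intro s hs
    simp only [Finset.mem_powersetCard_univ] at *
    rw [Finset.card_image_of_injective _ e.symm.injective]; exact hs
  · intro s _
    ext x
    simp
  · intro s _
    ext x
    simp
  · intro s _
    rw [Finset.prod_image (fun x _ y _ h => e.injective h)]
    rfl

lemma gamma_comp_perm (n k : ℕ) (l : Fin n → ℝ) (hl : l ∈ Gamma n k)
    (e : Equiv.Perm (Fin n)) : l ∘ e ∈ Gamma n k := by
  intro j hj1 hj2
  rw [esymm_comp_perm]
  exact hl j hj1 hj2

lemma key_ds (n : ℕ) (lam mu : Fin n → ℝ)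
    (hperm : ∀ e : Equiv.Perm (Fin n), 0 ≤ ∑ i, mu i * lam (e i))
    (S : Matrix (Fin n) (Fin n) ℝ) (hS : S ∈ doublyStochastic ℝ (Fin n)) :
    0 ≤ ∑ i, ∑ j, mu i * lam j * S i j := by
  obtain ⟨w, hw0, _, hw⟩ := exists_eq_sum_perm_of_mem_doublyStochastic hS
  have hSapp : ∀ i j, S i j = ∑ σ : Equiv.Perm (Fin n), w σ * (if σ i = j then (1:ℝ) else 0) := by
    intro i j
    rw [← hw, Matrix.sum_apply]
    refine Finset.sum_congr rfl fun σ _ => ?_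
    simp [Equiv.Perm.permMatrix, PEquiv.toMatrix_apply, Equiv.toPEquiv_apply]
  have h1 : ∀ i : Fin n, ∑ j, ∑ σ : Equiv.Perm (Fin n),
      mu i * lam j * (w σ * if σ i = j then (1:ℝ) else 0)
      = ∑ σ : Equiv.Perm (Fin n), w σ * (mu i * lam (σ i)) := by
    intro i
    rw [Finset.sum_comm]
    refine Finset.sum_congr rfl fun σ _ => ?_
    simp only [mul_ite, mul_one, mul_zero, Finset.sum_ite_eq, Finset.mem_univ, if_true]
    ring
  have hmain : ∑ i, ∑ j, mu i * lam j * S i j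
      = ∑ σ : Equiv.Perm (Fin n), w σ * ∑ i, mu i * lam (σ i) := by
    simp only [hSapp, Finset.mul_sum, h1]
    rw [Finset.sum_comm]
  rw [hmain]
  exact Finset.sum_nonneg fun σ _ => mul_nonneg (hw0 σ) (hperm σ)

/-- if A, B are symmetric with λ(A) ∈ Γₖ⁺ and λ(B) ∈ (Γₖ⁺)*,
then Trace(AB) ≥ 0. -/
theorem trace_nonneg_of_dual (n k : ℕ) (hn : 1 ≤ n) (hk1 : 1 ≤ k) (hk2 : k ≤ n)
    (A B : Matrix (Fin n) (Fin n) ℝ) (hA : A.IsHermitian) (hB : B.IsHermitian)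
    (hAmem : hA.eigenvalues ∈ Gamma n k)
    (hBdual : ∀ μ ∈ Gamma n k, 0 ≤ ∑ i, hB.eigenvalues i * μ i) :
    0 ≤ (A * B).trace := by
  set lam := hA.eigenvalues with hlam
  set mu := hB.eigenvalues with hmu
  set U : Matrix (Fin n) (Fin n) ℝ := (hA.eigenvectorUnitary : Matrix (Fin n) (Fin n) ℝ) with hUdef
  set V : Matrix (Fin n) (Fin n) ℝ := (hB.eigenvectorUnitary : Matrix (Fin n) (Fin n) ℝ) with hVdef
  have hU1 : U * star U = 1 := Matrix.mem_unitaryGroup_iff.mp (hA.eigenvectorUnitary).2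
  have hU2 : star U * U = 1 := Matrix.mem_unitaryGroup_iff'.mp (hA.eigenvectorUnitary).2
  have hV1 : V * star V = 1 := Matrix.mem_unitaryGroup_iff.mp (hB.eigenvectorUnitary).2
  have hV2 : star V * V = 1 := Matrix.mem_unitaryGroup_iff'.mp (hB.eigenvectorUnitary).2
  set W : Matrix (Fin n) (Fin n) ℝ := star U * V with hWdef
  have hW1 : W * star W = 1 := by
    rw [hWdef, Matrix.star_mul, star_star, Matrix.mul_assoc, ← Matrix.mul_assoc V, hV1,
      Matrix.one_mul, hU2]
  have hW2 : star W * W = 1 := by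
    rw [hWdef, Matrix.star_mul, star_star, Matrix.mul_assoc, ← Matrix.mul_assoc U, hU1,
      Matrix.one_mul, hV2]
  have hco : ∀ (C : Matrix (Fin n) (Fin n) ℝ) (hC : C.IsHermitian),
      (RCLike.ofReal ∘ hC.eigenvalues : Fin n → ℝ) = hC.eigenvalues := by
    intro C hC; funext x; simp [RCLike.ofReal]
  have hAeq := hA.spectral_theorem
  have hBeq := hB.spectral_theorem
  rw [hco A hA] at hAeq
  rw [hco B hB] at hBeq
  have h1 : (A * B).trace = (Matrix.diagonal lam * (W * (Matrix.diagonal mu * star W))).trace := by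
    conv_lhs => rw [hAeq, hBeq]
    simp only [Unitary.conjStarAlgAut_apply, Unitary.coe_star]
    rw [hWdef, Matrix.star_mul, star_star]
    simp only [Matrix.mul_assoc]
    rw [Matrix.trace_mul_comm]
    simp only [Matrix.mul_assoc]
    rfl
  have h2 : (Matrix.diagonal lam * (W * (Matrix.diagonal mu * star W))).trace
      = ∑ i, ∑ j, lam i * (mu j * W i j ^ 2) := by
    rw [Matrix.trace]
    refine Finset.sum_congr rfl fun i _ => ?_
    rw [Matrix.diag_apply, Matrix.diagonal_mul, Matrix.mul_apply, Finset.mul_sum]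
    refine Finset.sum_congr rfl fun j _ => ?_
    rw [Matrix.diagonal_mul, Matrix.star_apply, star_trivial]
    ring
  set S : Matrix (Fin n) (Fin n) ℝ := Matrix.of (fun i j => W j i ^ 2) with hSdef
  have hS : S ∈ doublyStochastic ℝ (Fin n) := by
    rw [mem_doublyStochastic_iff_sum]
    refine ⟨fun i j => sq_nonneg _, fun i => ?_, fun j => ?_⟩
    · have := congrArg (fun M => M i i) hW2
      simp only [Matrix.mul_apply, Matrix.star_apply, star_trivial, Matrix.one_apply_eq] at this
      rw [← this]
      refine Finset.sum_congr rfl fun j _ => ?_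
      simp [hSdef]; ring
    · have := congrArg (fun M => M j j) hW1
      simp only [Matrix.mul_apply, Matrix.star_apply, star_trivial, Matrix.one_apply_eq] at this
      rw [← this]
      refine Finset.sum_congr rfl fun i _ => ?_
      simp [hSdef]; ring
  have hperm : ∀ e : Equiv.Perm (Fin n), 0 ≤ ∑ i, mu i * lam (e i) := by
    intro e
    have := hBdual (lam ∘ e) (gamma_comp_perm n k lam hAmem e)
    simpa using this
  have hkey := key_ds n lam mu hperm S hS
  have h3 : ∑ i, ∑ j, mu i * lam j * S i j = ∑ i, ∑ j, lam i * (mu j * W i j ^ 2) := by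
    rw [Finset.sum_comm]
    refine Finset.sum_congr rfl fun i _ => Finset.sum_congr rfl fun j _ => ?_
    simp only [hSdef, Matrix.of_apply]
    ring
  rw [h1, h2, ← h3]
  exact hkey
end
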